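/- Let (λ_i)_{i≥1} be positive reals with λ_{n+1} ≥ 2(λ₁ + … + λ_n) for all n. For disjoint finite subsets I, J of ℕ and n ≥ 0 set λ_n(I) = λ(I ∩ {1,…,n}). Then |λ_n(I) − λ_n(J)| ≤ |λ_{n+1}(I) − λ_{n+1}(J)| for all n, and hence |λ_k(I) − λ_k(J)| ≤ |λ(I) − λ(J)| whenever k ≥ 0 and I ∪ J is finite. -/
import Mathlib


/-- With `λ_{n+1} ≥ 2(λ₁ + … + λₙ)` (`λᵢ > 0`), setting
`λₙ(I) = λ(I ∩ {1,…,n})` for disjoint finite sets `I, J` of positive integers, one has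
`|λₙ(I) − λₙ(J)| ≤ |λ_{n+1}(I) − λ_{n+1}(J)|` for all `n ≥ 0`, and hence
`|λ_k(I) − λ_k(J)| ≤ |λ(I) − λ(J)|` for all `k ≥ 0`. -/
theorem stmt_10
    (lam : ℕ → ℝ) (hpos : ∀ i ≥ 1, 0 < lam i)
    (hgrow : ∀ n : ℕ, lam (n + 1) ≥ 2 * ∑ i ∈ Finset.Icc 1 n, lam i)
    (I J : Finset ℕ) (hdisj : Disjoint I J) (hposIJ : ∀ i ∈ I ∪ J, 1 ≤ i) :
    (∀ n : ℕ,
      |(∑ i ∈ I ∩ Finset.Icc 1 n, lam i) - ∑ j ∈ J ∩ Finset.Icc 1 n, lam j|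
        ≤ |(∑ i ∈ I ∩ Finset.Icc 1 (n + 1), lam i) - ∑ j ∈ J ∩ Finset.Icc 1 (n + 1), lam j|) ∧
    (∀ k : ℕ,
      |(∑ i ∈ I ∩ Finset.Icc 1 k, lam i) - ∑ j ∈ J ∩ Finset.Icc 1 k, lam j|
        ≤ |(∑ i ∈ I, lam i) - ∑ j ∈ J, lam j|) := by
  set g : ℕ → ℝ := fun i => (if i ∈ I then lam i else 0) - (if i ∈ J then lam i else 0) with hg
  set f : ℕ → ℝ := fun n => (∑ i ∈ I ∩ Finset.Icc 1 n, lam i)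
      - ∑ j ∈ J ∩ Finset.Icc 1 n, lam j with hf
  have hfg : ∀ n, f n = ∑ i ∈ Finset.Icc 1 n, g i := by
    intro n
    simp only [hf, hg, Finset.sum_sub_distrib, Finset.sum_ite_mem, Finset.inter_comm]
  have habs : ∀ n, |f n| ≤ ∑ i ∈ Finset.Icc 1 n, lam i := by
    intro n
    rw [hfg]
    refine (Finset.abs_sum_le_sum_abs _ _).trans (Finset.sum_le_sum fun i hi => ?_)
    have hi1 : 1 ≤ i := (Finset.mem_Icc.mp hi).1
    have hl := (hpos i hi1).le
    by_cases hI : i ∈ I <;> by_cases hJ : i ∈ J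
    · exact absurd hJ (Finset.disjoint_left.mp hdisj hI)
    · simp [hg, hI, hJ, abs_of_nonneg hl]
    · simp [hg, hI, hJ, abs_of_nonpos (neg_nonpos.mpr hl)]
    · simp [hg, hI, hJ, hl]
  have hstep : ∀ n, |f n| ≤ |f (n + 1)| := by
    intro n
    have h1 : f (n + 1) = f n + g (n + 1) := by
      rw [hfg, hfg, Finset.sum_Icc_succ_top (Nat.le_add_left 1 n)]
    by_cases hz : g (n + 1) = 0
    · rw [h1, hz, add_zero]
    · have hga : |g (n + 1)| = lam (n + 1) := by
        have hl := (hpos (n + 1) (Nat.le_add_left 1 n)).le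
        by_cases hI : n + 1 ∈ I <;> by_cases hJ : n + 1 ∈ J
        · exact absurd hJ (Finset.disjoint_left.mp hdisj hI)
        · simp [hg, hI, hJ, abs_of_nonneg hl]
        · simp [hg, hI, hJ, abs_of_nonpos (neg_nonpos.mpr hl)]
        · exact absurd (by simp [hg, hI, hJ]) hz
      have h2 : |f n| ≤ ∑ i ∈ Finset.Icc 1 n, lam i := habs n
      have h3 := hgrow n
      calc |f n| ≤ |g (n + 1)| - |f n| := by rw [hga]; linarith
        _ ≤ |f n + g (n + 1)| := by
            have h4 := abs_sub_abs_le_abs_sub (g (n + 1)) (-(f n))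
            rw [abs_neg, sub_neg_eq_add, add_comm (g (n + 1)) (f n)] at h4
            linarith
        _ = |f (n + 1)| := by rw [h1]
  have hmono : ∀ a b, a ≤ b → |f a| ≤ |f b| := by
    intro a b hab
    induction b with
    | zero => simp_all
    | succ m ih =>
      rcases Nat.lt_or_ge a (m + 1) with h | h
      · exact (ih (Nat.lt_succ_iff.mp h)).trans (hstep m)
      · have : a = m + 1 := le_antisymm hab h
        simp [this]
  refine ⟨hstep, fun k => ?_⟩
  set N := max k ((I ∪ J).sup id) with hN
  have hfull : ∀ K : Finset ℕ, K ⊆ I ∪ J → K ∩ Finset.Icc 1 N = K := by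
    intro K hK
    apply Finset.inter_eq_left.mpr
    intro i hi
    have hiu := hK hi
    exact Finset.mem_Icc.mpr ⟨hposIJ i hiu,
      le_max_of_le_right (Finset.le_sup (f := id) hiu)⟩
  have hfN : f N = (∑ i ∈ I, lam i) - ∑ j ∈ J, lam j := by
    rw [hf]
    simp only [hfull I Finset.subset_union_left, hfull J Finset.subset_union_right]
  calc |f k| ≤ |f N| := hmono k N (le_max_left _ _)
    _ = _ := by rw [hfN]
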